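/- For every m ∈ ℕ, ∫_{ℝ²} φ_m(x)·φ_0(y)·φ_m((x+y)/√2)·φ_0((y−x)/√2) dx dy = 2^{−m/2}, where φ_m denotes the m-th Hermite function. -/

import Mathlib

open scoped BigOperators
open MeasureTheory

open Polynomial Finset

theorem derivative_hermite' (n : ℕ) :
    derivative (hermite n) = n • hermite (n - 1) := by
  induction n with
  | zero => simp [hermite_zero]
  | succ k ih =>
    rw [hermite_succ, derivative_sub, derivative_mul, derivative_X, one_mul, ih]
    cases k with
    | zero => simp [hermite_zero]
    | succ j =>
      simp only [Nat.add_sub_cancel, hermite_succ j, nsmul_eq_mul]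
      rw [derivative_mul, derivative_natCast]
      push_cast
      ring

theorem hermite_rec (n : ℕ) :
    hermite (n + 2) = X * hermite (n + 1) - C (n + 1 : ℤ) * hermite n := by
  rw [hermite_succ (n+1), derivative_hermite' (n+1), Nat.add_sub_cancel]
  simp [nsmul_eq_mul]

/-- The probabilists' Hermite polynomial over `ℝ`. -/
noncomputable def Hp (n : ℕ) : Polynomial ℝ := (Polynomial.hermite n).map (Int.castRingHom ℝ)

@[simp] theorem Hp_zero_eval (x : ℝ) : (Hp 0).eval x = 1 := by
  simp [Hp, hermite_zero]

@[simp] theorem Hp_one_eval (x : ℝ) : (Hp 1).eval x = x := by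
  simp [Hp, hermite_one]

theorem Hp_rec (n : ℕ) : Hp (n + 2) = X * Hp (n + 1) - C ((n : ℝ) + 1) * Hp n := by
  unfold Hp
  rw [hermite_rec, Polynomial.map_sub, Polynomial.map_mul, Polynomial.map_mul,
    Polynomial.map_X, Polynomial.map_C]
  simp only [map_add, map_one, map_natCast]

theorem Hp_rec_eval (n : ℕ) (z : ℝ) :
    (Hp (n + 2)).eval z = z * (Hp (n + 1)).eval z - ((n : ℝ) + 1) * (Hp n).eval z := by
  rw [Hp_rec]; simp

/-- uniform one-step recurrence with truncated subtraction -/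
theorem Hp_step (m : ℕ) (z : ℝ) :
    (Hp (m + 1)).eval z = z * (Hp m).eval z - (m : ℝ) * (Hp (m - 1)).eval z := by
  cases m with
  | zero => simp
  | succ j => rw [Hp_rec_eval]; push_cast; simp

theorem choose_aux (n k : ℕ) (hk : k ≤ n + 1) :
    (n + 1 - k) * (n + 1).choose k = (n + 1) * n.choose k := by
  rcases Nat.lt_or_ge k (n + 1) with h | h
  · have hkn : k ≤ n := Nat.lt_succ_iff.mp h
    have h1 : (n + 1).choose (n + 1 - k) = (n + 1).choose k := Nat.choose_symm hk
    have h2 : (n + 1) * n.choose (n - k) = (n + 1).choose (n - k + 1) * (n - k + 1) :=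
      Nat.add_one_mul_choose_eq n (n - k)
    have h3 : n.choose (n - k) = n.choose k := Nat.choose_symm hkn
    have h4 : n - k + 1 = n + 1 - k := by omega
    rw [h3, h4, h1] at h2
    rw [Nat.mul_comm]
    exact h2.symm
  · have : k = n + 1 := le_antisymm hk h
    subst this
    simp [Nat.choose_succ_self]


open Real in
theorem S_rec (n : ℕ) (x y : ℝ) :
    (∑ k ∈ range (n+3), (((n+2).choose k : ℝ)) * (Hp k).eval x * (Hp (n+2-k)).eval y)
    = (x + y) * (∑ k ∈ range (n+2), (((n+1).choose k : ℝ)) * (Hp k).eval x * (Hp (n+1-k)).eval y)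
      - 2*((n:ℝ)+1) * (∑ k ∈ range (n+1), ((n.choose k : ℝ)) * (Hp k).eval x * (Hp (n-k)).eval y) := by
  -- the A sum
  have hA : (∑ k ∈ range (n+2), (((n+1).choose k : ℝ)) * (Hp k).eval x * (Hp (n+2-k)).eval y)
      = y * (∑ k ∈ range (n+2), (((n+1).choose k : ℝ)) * (Hp k).eval x * (Hp (n+1-k)).eval y)
        - ((n:ℝ)+1) * (∑ k ∈ range (n+1), ((n.choose k : ℝ)) * (Hp k).eval x * (Hp (n-k)).eval y) := by
    have h1 : ∀ k ∈ range (n+2),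
        (((n+1).choose k : ℝ)) * (Hp k).eval x * (Hp (n+2-k)).eval y
        = y * ((((n+1).choose k : ℝ)) * (Hp k).eval x * (Hp (n+1-k)).eval y)
          - ((((n+1) * n.choose k : ℕ)) : ℝ) * ((Hp k).eval x * (Hp (n-k)).eval y) := by
      intro k hk
      have hk' : k < n+2 := mem_range.mp hk
      have e1 : n+2-k = (n+1-k)+1 := by omega
      have e2 : (n+1-k) - 1 = n-k := by omega
      have e3 : ((n+1-k) * ((n+1).choose k) : ℕ) = (n+1) * n.choose k :=
        choose_aux n k (by omega)
      rw [e1, Hp_step, e2, ← e3]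
      push_cast
      ring
    rw [Finset.sum_congr rfl h1, Finset.sum_sub_distrib, ← Finset.mul_sum]
    congr 1
    rw [Finset.sum_range_succ]
    simp only [Nat.choose_succ_self, Nat.mul_zero, Nat.cast_zero, zero_mul, add_zero]
    rw [Finset.mul_sum]
    refine Finset.sum_congr rfl fun k _ => ?_
    push_cast
    ring
  -- the B sum
  have hB : (∑ k ∈ range (n+2), (((n+1).choose k : ℝ)) * (Hp (k+1)).eval x * (Hp (n+1-k)).eval y)
      = x * (∑ k ∈ range (n+2), (((n+1).choose k : ℝ)) * (Hp k).eval x * (Hp (n+1-k)).eval y)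
        - ((n:ℝ)+1) * (∑ k ∈ range (n+1), ((n.choose k : ℝ)) * (Hp k).eval x * (Hp (n-k)).eval y) := by
    have h1 : ∀ k ∈ range (n+2),
        (((n+1).choose k : ℝ)) * (Hp (k+1)).eval x * (Hp (n+1-k)).eval y
        = x * ((((n+1).choose k : ℝ)) * (Hp k).eval x * (Hp (n+1-k)).eval y)
          - (((n+1).choose k * k : ℕ) : ℝ) * ((Hp (k-1)).eval x * (Hp (n+1-k)).eval y) := by
      intro k _
      rw [Hp_step]
      push_cast
      ring
    rw [Finset.sum_congr rfl h1, Finset.sum_sub_distrib, ← Finset.mul_sum]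
    congr 1
    rw [Finset.sum_range_succ' _ (n+1)]
    simp only [Nat.mul_zero, Nat.cast_zero, zero_mul, add_zero, Nat.add_sub_cancel]
    rw [Finset.mul_sum]
    refine Finset.sum_congr rfl fun k hk => ?_
    have e1 : n+1-(k+1) = n-k := by omega
    have e2 : ((n+1).choose (k+1) * (k+1) : ℕ) = (n+1) * n.choose k :=
      (Nat.add_one_mul_choose_eq n k).symm
    rw [e1, e2]
    push_cast
    ring
  -- split the (n+2) sum
  rw [Finset.sum_range_succ' _ (n+2)]
  have h0 : (((n+2).choose 0 : ℝ)) * (Hp 0).eval x * (Hp (n+2-0)).eval y = (Hp (n+2)).eval y := by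
    simp
  have hsplit : ∀ k ∈ range (n+2),
      (((n+2).choose (k+1) : ℝ)) * (Hp (k+1)).eval x * (Hp (n+2-(k+1))).eval y
      = (((n+1).choose k : ℝ)) * (Hp (k+1)).eval x * (Hp (n+1-k)).eval y
        + (((n+1).choose (k+1) : ℝ)) * (Hp (k+1)).eval x * (Hp (n+1-k)).eval y := by
    intro k _
    have e1 : n+2-(k+1) = n+1-k := by omega
    rw [e1, Nat.choose_succ_succ]
    push_cast
    ring
  rw [Finset.sum_congr rfl hsplit, Finset.sum_add_distrib, h0, hB]
  -- now handle  ∑ (n+1).choose (k+1) ... + (Hp (n+2)).eval y = A-sum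
  have hC : (∑ k ∈ range (n+2), (((n+1).choose (k+1) : ℝ)) * (Hp (k+1)).eval x * (Hp (n+1-k)).eval y)
      + (Hp (n+2)).eval y
      = ∑ k ∈ range (n+2), (((n+1).choose k : ℝ)) * (Hp k).eval x * (Hp (n+2-k)).eval y := by
    have : ∑ k ∈ range (n+3), (((n+1).choose k : ℝ)) * (Hp k).eval x * (Hp (n+2-k)).eval y
        = ∑ k ∈ range (n+2), (((n+1).choose (k+1) : ℝ)) * (Hp (k+1)).eval x * (Hp (n+2-(k+1))).eval y
          + (((n+1).choose 0 : ℝ)) * (Hp 0).eval x * (Hp (n+2-0)).eval y :=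
      Finset.sum_range_succ' _ (n+2)
    rw [Finset.sum_range_succ _ (n+2)] at this
    simp only [Nat.choose_succ_self, Nat.cast_zero, zero_mul, add_zero, Nat.choose_zero_right,
      Nat.cast_one, one_mul, Hp_zero_eval, Nat.sub_zero] at this
    have e : (∑ k ∈ range (n+2), (((n+1).choose (k+1) : ℝ)) * (Hp (k+1)).eval x * (Hp (n+2-(k+1))).eval y)
        = ∑ k ∈ range (n+2), (((n+1).choose (k+1) : ℝ)) * (Hp (k+1)).eval x * (Hp (n+1-k)).eval y :=
      Finset.sum_congr rfl fun k _ => by rw [show n+2-(k+1) = n+1-k from by omega]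
    rw [e] at this
    rw [← this]
  rw [add_assoc, hC, hA]
  ring

theorem hermite_addition (n : ℕ) (x y : ℝ) :
    (∑ k ∈ range (n+1), ((n.choose k : ℝ)) * (Hp k).eval x * (Hp (n-k)).eval y)
    = Real.sqrt 2 ^ n * (Hp n).eval ((x+y)/Real.sqrt 2) := by
  have h2 : Real.sqrt 2 ≠ 0 := ne_of_gt (Real.sqrt_pos.mpr two_pos)
  have hss : Real.sqrt 2 * Real.sqrt 2 = 2 := Real.mul_self_sqrt (by norm_num)
  induction n using Nat.twoStepInduction with
  | zero => simp
  | one =>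
    rw [Finset.sum_range_succ, Finset.sum_range_one]
    simp only [Nat.choose_self, Nat.choose_zero_right, Nat.cast_one, one_mul, Hp_zero_eval,
      Hp_one_eval, Nat.sub_self, Nat.sub_zero, mul_one, pow_one]
    field_simp
    ring
  | more n ih1 ih2 =>
    have hz : Real.sqrt 2 * ((x+y)/Real.sqrt 2) = x + y := mul_div_cancel₀ _ h2
    rw [S_rec, ih2, ih1, Hp_rec_eval n ((x+y)/Real.sqrt 2), pow_succ, pow_succ]
    linear_combination (-(Real.sqrt 2 ^ n * Real.sqrt 2 *
        (Hp (n+1)).eval ((x+y)/Real.sqrt 2))) * hz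
      + (((n:ℝ)+1) * (Hp n).eval ((x+y)/Real.sqrt 2) * Real.sqrt 2 ^ n) * hss

open Filter MeasureTheory in
theorem integrable_poly_gauss (p : Polynomial ℝ) :
    Integrable (fun x : ℝ => p.eval x * Real.exp (-x^2)) := by
  induction p using Polynomial.induction_on' with
  | add p q hp hq => simpa [add_mul, Pi.add_def] using hp.add hq
  | monomial n a =>
    have h : Integrable (fun x : ℝ => x ^ ((n : ℝ)) * Real.exp (-1*x^2)) :=
      integrable_rpow_mul_exp_neg_mul_sq one_pos
        (lt_of_lt_of_le neg_one_lt_zero (Nat.cast_nonneg n))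
    simp only [Real.rpow_natCast, neg_one_mul] at h
    simpa [Polynomial.eval_monomial, mul_assoc] using h.const_mul a

open Filter MeasureTheory in
theorem tendsto_poly_gauss_atTop (p : Polynomial ℝ) :
    Tendsto (fun x : ℝ => p.eval x * Real.exp (-x^2)) atTop (nhds 0) := by
  have h1 := Polynomial.tendsto_div_exp_atTop p
  have h2 : Tendsto (fun x : ℝ => Real.exp (x - x^2)) atTop (nhds 0) := by
    apply Real.tendsto_exp_atBot.comp
    apply tendsto_atBot_mono (f := fun x : ℝ => 1 - x)
    · intro x; nlinarith [sq_nonneg (x-1)]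
    · exact (Filter.tendsto_atBot_add_const_left atTop (1:ℝ) tendsto_neg_atTop_atBot).congr fun x => by ring
  have := h1.mul h2
  rw [mul_zero] at this
  refine this.congr fun x => ?_
  rw [Real.exp_sub, Real.exp_neg]
  field_simp

open Filter MeasureTheory in
theorem tendsto_poly_gauss_atBot (p : Polynomial ℝ) :
    Tendsto (fun x : ℝ => p.eval x * Real.exp (-x^2)) atBot (nhds 0) := by
  have h1 := (tendsto_poly_gauss_atTop (p.comp (-Polynomial.X))).comp tendsto_neg_atBot_atTop
  refine h1.congr fun x => ?_
  simp [Function.comp, Polynomial.eval_comp, neg_sq]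

theorem hasDerivAt_poly_gauss (p : Polynomial ℝ) (x : ℝ) :
    HasDerivAt (fun x : ℝ => p.eval x * Real.exp (-x^2))
      ((p.derivative.eval x - 2*x*p.eval x) * Real.exp (-x^2)) x := by
  have hp := p.hasDerivAt x
  have h1 : HasDerivAt (fun x : ℝ => -x^2) (-(2*x)) x := by
    simpa using (hasDerivAt_pow 2 x).fun_neg
  have he := h1.exp
  have := hp.fun_mul he
  refine this.congr_deriv ?_
  ring

open Filter MeasureTheory in
theorem integral_deriv_poly_gauss (p : Polynomial ℝ) :
    ∫ x : ℝ, (p.derivative.eval x - 2*x*p.eval x) * Real.exp (-x^2) = 0 := by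
  have hint : Integrable (fun x : ℝ => (p.derivative.eval x - 2*x*p.eval x) * Real.exp (-x^2)) := by
    have h := integrable_poly_gauss (p.derivative - Polynomial.C 2 * Polynomial.X * p)
    refine h.congr (Eventually.of_forall fun x => ?_)
    simp [Polynomial.eval_sub, Polynomial.eval_mul]
  have hcont : Continuous (fun x : ℝ => p.eval x * Real.exp (-x^2)) :=
    p.continuous.mul (Real.continuous_exp.comp (continuous_pow 2).neg)
  have h1 := integral_Ioi_of_hasDerivAt_of_tendsto (a := (0:ℝ))
    hcont.continuousWithinAt (fun x _ => hasDerivAt_poly_gauss p x)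
    hint.integrableOn (tendsto_poly_gauss_atTop p)
  have h2 := integral_Iic_of_hasDerivAt_of_tendsto (a := (0:ℝ))
    hcont.continuousWithinAt (fun x _ => hasDerivAt_poly_gauss p x)
    hint.integrableOn (tendsto_poly_gauss_atBot p)
  rw [← intervalIntegral.integral_Iic_add_Ioi (b := (0:ℝ)) hint.integrableOn hint.integrableOn,
    h1, h2]
  ring

open Filter MeasureTheory in
theorem integral_parts_poly_gauss (p : Polynomial ℝ) :
    ∫ x : ℝ, p.derivative.eval x * Real.exp (-x^2)
      = ∫ x : ℝ, 2*x*p.eval x * Real.exp (-x^2) := by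
  have h := integral_deriv_poly_gauss p
  have hi1 : Integrable (fun x : ℝ => p.derivative.eval x * Real.exp (-x^2)) :=
    integrable_poly_gauss _
  have hi2 : Integrable (fun x : ℝ => 2*x*p.eval x * Real.exp (-x^2)) := by
    have := integrable_poly_gauss (Polynomial.C 2 * Polynomial.X * p)
    refine this.congr (Eventually.of_forall fun x => ?_)
    simp [Polynomial.eval_mul]
  rw [show (fun x : ℝ => (p.derivative.eval x - 2*x*p.eval x) * Real.exp (-x^2))
      = fun x : ℝ => p.derivative.eval x * Real.exp (-x^2)
        - 2*x*p.eval x * Real.exp (-x^2) from funext fun x => by ring,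
    integral_sub hi1 hi2] at h
  linarith

theorem Hp_derivative_eval (n : ℕ) (t : ℝ) :
    (Hp n).derivative.eval t = n * (Hp (n-1)).eval t := by
  unfold Hp
  rw [Polynomial.derivative_map, derivative_hermite', nsmul_eq_mul, Polynomial.map_mul,
    Polynomial.map_natCast, Polynomial.eval_mul, Polynomial.eval_natCast]

theorem Hp_succ_eval (n : ℕ) (t : ℝ) :
    (Hp (n+1)).eval t = t * (Hp n).eval t - (Hp n).derivative.eval t := by
  unfold Hp
  rw [hermite_succ, Polynomial.map_sub, Polynomial.map_mul, Polynomial.map_X,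
    Polynomial.derivative_map, Polynomial.eval_sub, Polynomial.eval_mul, Polynomial.eval_X]

open MeasureTheory Filter in
theorem integrable_scaled (p : Polynomial ℝ) :
    Integrable (fun x : ℝ => p.eval (Real.sqrt 2 * x) * Real.exp (-x^2)) := by
  have h := integrable_poly_gauss (p.comp (Polynomial.C (Real.sqrt 2) * Polynomial.X))
  refine h.congr (Eventually.of_forall fun x => ?_)
  simp [Polynomial.eval_comp]

open MeasureTheory Filter in
theorem integrable_scaled' (p : Polynomial ℝ) :
    Integrable (fun x : ℝ => x * p.eval (Real.sqrt 2 * x) * Real.exp (-x^2)) := by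
  have h := integrable_poly_gauss
    (Polynomial.X * p.comp (Polynomial.C (Real.sqrt 2) * Polynomial.X))
  refine h.congr (Eventually.of_forall fun x => ?_)
  simp [Polynomial.eval_comp]

open MeasureTheory Filter in
theorem parts_scaled (p : Polynomial ℝ) :
    Real.sqrt 2 * ∫ x : ℝ, p.derivative.eval (Real.sqrt 2 * x) * Real.exp (-x^2)
      = 2 * ∫ x : ℝ, x * p.eval (Real.sqrt 2 * x) * Real.exp (-x^2) := by
  have h := integral_parts_poly_gauss (p.comp (Polynomial.C (Real.sqrt 2) * Polynomial.X))
  have e1 : (fun x : ℝ => (p.comp (Polynomial.C (Real.sqrt 2) * Polynomial.X)).derivative.eval x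
      * Real.exp (-x^2))
      = fun x : ℝ => Real.sqrt 2 * (p.derivative.eval (Real.sqrt 2 * x) * Real.exp (-x^2)) := by
    funext x
    rw [Polynomial.derivative_comp]
    simp [Polynomial.eval_comp]
    ring
  have e2 : (fun x : ℝ => 2*x*(p.comp (Polynomial.C (Real.sqrt 2) * Polynomial.X)).eval x
      * Real.exp (-x^2))
      = fun x : ℝ => 2 * (x * p.eval (Real.sqrt 2 * x) * Real.exp (-x^2)) := by
    funext x
    simp [Polynomial.eval_comp]
    ring
  rw [e1, e2, integral_const_mul, integral_const_mul] at h
  exact h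

open MeasureTheory Filter in
theorem integral_Hp_succ_zero (k : ℕ) :
    ∫ x : ℝ, (Hp (k+1)).eval (Real.sqrt 2 * x) * Real.exp (-x^2) = 0 := by
  have h2 : Real.sqrt 2 ≠ 0 := ne_of_gt (Real.sqrt_pos.mpr two_pos)
  have hss : Real.sqrt 2 * Real.sqrt 2 = 2 := Real.mul_self_sqrt (by norm_num)
  have hparts := parts_scaled (Hp k)
  have e0 : (fun x : ℝ => (Hp (k+1)).eval (Real.sqrt 2 * x) * Real.exp (-x^2))
      = fun x : ℝ => Real.sqrt 2 * (x * (Hp k).eval (Real.sqrt 2 * x) * Real.exp (-x^2))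
        - (Hp k).derivative.eval (Real.sqrt 2 * x) * Real.exp (-x^2) := by
    funext x
    rw [Hp_succ_eval]
    ring
  rw [e0, integral_sub ((integrable_scaled' (Hp k)).const_mul _) (integrable_scaled _),
    integral_const_mul]
  set I1 := ∫ x : ℝ, x * (Hp k).eval (Real.sqrt 2 * x) * Real.exp (-x^2)
  set J := ∫ x : ℝ, (Hp k).derivative.eval (Real.sqrt 2 * x) * Real.exp (-x^2)
  have key : Real.sqrt 2 * (Real.sqrt 2 * I1 - J) = 0 := by
    linear_combination I1 * hss - hparts
  have := (mul_eq_zero.mp key).resolve_left h2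
  linarith

open MeasureTheory Filter in
theorem integral_Hp_mul_succ (a k : ℕ) :
    ∫ x : ℝ, (Hp a).eval (Real.sqrt 2 * x) * (Hp (k+1)).eval (Real.sqrt 2 * x) * Real.exp (-x^2)
      = a * ∫ x : ℝ,
        (Hp (a-1)).eval (Real.sqrt 2 * x) * (Hp k).eval (Real.sqrt 2 * x) * Real.exp (-x^2) := by
  have h2 : Real.sqrt 2 ≠ 0 := ne_of_gt (Real.sqrt_pos.mpr two_pos)
  have hss : Real.sqrt 2 * Real.sqrt 2 = 2 := Real.mul_self_sqrt (by norm_num)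
  have hparts := parts_scaled (Hp a * Hp k)
  -- rewrite hparts integrands
  have e1 : (fun x : ℝ => (Hp a * Hp k).derivative.eval (Real.sqrt 2 * x) * Real.exp (-x^2))
      = fun x : ℝ =>
        (a : ℝ) * ((Hp (a-1)).eval (Real.sqrt 2 * x) * (Hp k).eval (Real.sqrt 2 * x)
            * Real.exp (-x^2))
        + (Hp a).eval (Real.sqrt 2 * x) * (Hp k).derivative.eval (Real.sqrt 2 * x)
            * Real.exp (-x^2) := by
    funext x
    rw [Polynomial.derivative_mul, Polynomial.eval_add, Polynomial.eval_mul, Polynomial.eval_mul,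
      Hp_derivative_eval a]
    ring
  have e2 : (fun x : ℝ => x * (Hp a * Hp k).eval (Real.sqrt 2 * x) * Real.exp (-x^2))
      = fun x : ℝ => x * ((Hp a).eval (Real.sqrt 2 * x) * (Hp k).eval (Real.sqrt 2 * x))
          * Real.exp (-x^2) := by
    funext x
    rw [Polynomial.eval_mul]
  rw [e1, e2] at hparts
  -- integrability helpers
  have ia : Integrable (fun x : ℝ =>
      (a : ℝ) * ((Hp (a-1)).eval (Real.sqrt 2 * x) * (Hp k).eval (Real.sqrt 2 * x)
        * Real.exp (-x^2))) := by
    have h := (integrable_scaled (Hp (a-1) * Hp k)).const_mul (a : ℝ)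
    refine h.congr (Eventually.of_forall fun x => ?_)
    simp only [Polynomial.eval_mul]
    try ring
  have ib : Integrable (fun x : ℝ =>
      (Hp a).eval (Real.sqrt 2 * x) * (Hp k).derivative.eval (Real.sqrt 2 * x)
        * Real.exp (-x^2)) := by
    have h := integrable_scaled (Hp a * (Hp k).derivative)
    refine h.congr (Eventually.of_forall fun x => ?_)
    simp only [Polynomial.eval_mul]
  rw [integral_add ia ib, integral_const_mul] at hparts
  -- expand goal using Hp_succ_eval
  have e0 : (fun x : ℝ => (Hp a).eval (Real.sqrt 2 * x) * (Hp (k+1)).eval (Real.sqrt 2 * x)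
      * Real.exp (-x^2))
      = fun x : ℝ =>
        Real.sqrt 2 * (x * ((Hp a).eval (Real.sqrt 2 * x) * (Hp k).eval (Real.sqrt 2 * x))
          * Real.exp (-x^2))
        - (Hp a).eval (Real.sqrt 2 * x) * (Hp k).derivative.eval (Real.sqrt 2 * x)
          * Real.exp (-x^2) := by
    funext x
    rw [Hp_succ_eval]
    ring
  have ic : Integrable (fun x : ℝ =>
      x * ((Hp a).eval (Real.sqrt 2 * x) * (Hp k).eval (Real.sqrt 2 * x)) * Real.exp (-x^2)) := by
    have h := integrable_scaled' (Hp a * Hp k)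
    refine h.congr (Eventually.of_forall fun x => ?_)
    simp only [Polynomial.eval_mul]
  rw [e0, integral_sub (ic.const_mul _) ib, integral_const_mul]
  set I1 := ∫ x : ℝ, x * ((Hp a).eval (Real.sqrt 2 * x) * (Hp k).eval (Real.sqrt 2 * x))
    * Real.exp (-x^2)
  set J := ∫ x : ℝ, (Hp a).eval (Real.sqrt 2 * x) * (Hp k).derivative.eval (Real.sqrt 2 * x)
    * Real.exp (-x^2)
  set K := ∫ x : ℝ, (Hp (a-1)).eval (Real.sqrt 2 * x) * (Hp k).eval (Real.sqrt 2 * x)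
    * Real.exp (-x^2)
  -- hparts : √2 * (a * K + J) = 2 * I1 ; goal : √2 * I1 - J = a * K
  have key : Real.sqrt 2 * (Real.sqrt 2 * I1 - J - (a : ℝ) * K) = 0 := by
    linear_combination I1 * hss - hparts
  have := (mul_eq_zero.mp key).resolve_left h2
  linarith

open MeasureTheory in
theorem integral_Hp_sq (m : ℕ) :
    ∫ x : ℝ, (Hp m).eval (Real.sqrt 2 * x) * (Hp m).eval (Real.sqrt 2 * x) * Real.exp (-x^2)
      = (m.factorial : ℝ) * Real.sqrt Real.pi := by
  induction m with
  | zero =>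
    simp only [Hp_zero_eval, one_mul, Nat.factorial_zero, Nat.cast_one]
    have := integral_gaussian 1
    simpa using this
  | succ k ih =>
    rw [integral_Hp_mul_succ (k+1) k]
    simp only [Nat.add_sub_cancel]
    rw [ih, Nat.factorial_succ]
    push_cast
    ring


/-- The physicists' Hermite polynomial `H_m(x) = 2^{m/2}·He_m(x√2)`, where `He_m` is
the probabilists' Hermite polynomial. -/
noncomputable def physHermite (m : ℕ) (x : ℝ) : ℝ :=
  (2 : ℝ) ^ ((m : ℝ) / 2) * Polynomial.aeval (x * Real.sqrt 2) (Polynomial.hermite m)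

/-- The `m`-th Hermite function `φ_m(x) = (2^m·m!·√π)^{−1/2}·H_m(x)·e^{−x²/2}`. -/
noncomputable def hermiteFun (m : ℕ) (x : ℝ) : ℝ :=
  ((2 : ℝ) ^ m * (m.factorial : ℝ) * Real.sqrt Real.pi) ^ (-(1 / 2 : ℝ)) *
    physHermite m x * Real.exp (-x ^ 2 / 2)

noncomputable def fA (m k : ℕ) (x : ℝ) : ℝ :=
  (m.choose k : ℝ) * (((2:ℝ)^m * (m.factorial:ℝ) * Real.sqrt Real.pi) ^ (-(1/2:ℝ)))^2
    * ((Real.sqrt Real.pi) ^ (-(1/2:ℝ)))^2 * (2:ℝ)^((m:ℝ)/2)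
    * ((Hp m).eval (Real.sqrt 2 * x) * (Hp k).eval (Real.sqrt 2 * x)) * Real.exp (-x^2)

noncomputable def gA (m k : ℕ) (y : ℝ) : ℝ :=
  (Hp (m-k)).eval (Real.sqrt 2 * y) * Real.exp (-y^2)

theorem haev (n : ℕ) (t : ℝ) : (Polynomial.aeval t) (hermite n) = (Hp n).eval t := by
  unfold Hp
  rw [Polynomial.eval_map, ← algebraMap_int_eq, ← Polynomial.aeval_def]

theorem hpow (m : ℕ) : (2:ℝ) ^ ((m:ℝ)/2) = Real.sqrt 2 ^ m := by
  rw [Real.sqrt_eq_rpow, ← Real.rpow_natCast ((2:ℝ)^(1/2:ℝ)) m,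
    ← Real.rpow_mul (by norm_num : (0:ℝ) ≤ 2)]
  congr 1
  ring

/-- the beam-splitter matrix element
`⟨m,0|U_{π/4}|m,0⟩ = ∫ φ_m(x)φ_0(y)φ_m((x+y)/√2)φ_0((y−x)/√2) dx dy = 2^{−m/2}`. -/
theorem hermite_beam_splitter_matrix_element (m : ℕ) :
    (∫ p : ℝ × ℝ,
        hermiteFun m p.1 * hermiteFun 0 p.2 *
          hermiteFun m ((p.1 + p.2) / Real.sqrt 2) *
          hermiteFun 0 ((p.2 - p.1) / Real.sqrt 2))
      = (2 : ℝ) ^ (-(m : ℝ) / 2) := by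
  have h2 : Real.sqrt 2 ≠ 0 := ne_of_gt (Real.sqrt_pos.mpr two_pos)
  have hss : Real.sqrt 2 * Real.sqrt 2 = 2 := Real.mul_self_sqrt (by norm_num)
  -- pointwise identity
  have hpt : ∀ x y : ℝ,
      hermiteFun m x * hermiteFun 0 y * hermiteFun m ((x + y) / Real.sqrt 2) *
        hermiteFun 0 ((y - x) / Real.sqrt 2)
      = ∑ k ∈ range (m+1), fA m k x * gA m k y := by
    intro x y
    have key : physHermite m ((x+y)/Real.sqrt 2)
        = ∑ k ∈ range (m+1), (m.choose k : ℝ) * (Hp k).eval (Real.sqrt 2 * x)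
            * (Hp (m-k)).eval (Real.sqrt 2 * y) := by
      unfold physHermite
      rw [haev, hpow,
        show ((x+y)/Real.sqrt 2) * Real.sqrt 2
          = (Real.sqrt 2 * x + Real.sqrt 2 * y)/Real.sqrt 2 from by field_simp]
      exact (hermite_addition m _ _).symm
    have hexp : Real.exp (-x^2/2) * Real.exp (-y^2/2)
        * Real.exp (-((x+y)/Real.sqrt 2)^2/2) * Real.exp (-((y-x)/Real.sqrt 2)^2/2)
        = Real.exp (-x^2) * Real.exp (-y^2) := by
      rw [← Real.exp_add, ← Real.exp_add, ← Real.exp_add, ← Real.exp_add]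
      congr 1
      rw [div_pow, div_pow, Real.sq_sqrt (by norm_num : (0:ℝ) ≤ 2)]
      ring
    have hph0 : ∀ t : ℝ, physHermite 0 t = 1 := by
      intro t
      unfold physHermite
      simp [hermite_zero]
    have hphm : physHermite m x = (2:ℝ)^((m:ℝ)/2) * (Hp m).eval (Real.sqrt 2 * x) := by
      unfold physHermite
      rw [haev, mul_comm x]
    have hR : ∑ k ∈ range (m+1), fA m k x * gA m k y
        = (∑ k ∈ range (m+1), (m.choose k : ℝ) * (Hp k).eval (Real.sqrt 2 * x)
            * (Hp (m-k)).eval (Real.sqrt 2 * y))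
          * ((((2:ℝ)^m * (m.factorial:ℝ) * Real.sqrt Real.pi) ^ (-(1/2:ℝ)))^2
            * ((Real.sqrt Real.pi) ^ (-(1/2:ℝ)))^2 * (2:ℝ)^((m:ℝ)/2)
            * (Hp m).eval (Real.sqrt 2 * x) * (Real.exp (-x^2) * Real.exp (-y^2))) := by
      rw [Finset.sum_mul]
      refine Finset.sum_congr rfl fun k _ => ?_
      unfold fA gA
      ring
    unfold hermiteFun
    rw [hph0, hph0, hphm, key, hR]
    simp only [pow_zero, Nat.factorial_zero, Nat.cast_one, one_mul, mul_one]
    linear_combination (((2:ℝ)^m * (m.factorial:ℝ) * Real.sqrt Real.pi) ^ (-(1/2:ℝ)))^2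
      * ((Real.sqrt Real.pi) ^ (-(1/2:ℝ)))^2 * (2:ℝ)^((m:ℝ)/2)
      * (Hp m).eval (Real.sqrt 2 * x)
      * (∑ k ∈ range (m+1), (m.choose k : ℝ) * (Hp k).eval (Real.sqrt 2 * x)
          * (Hp (m-k)).eval (Real.sqrt 2 * y)) * hexp
  -- integrability of each summand
  have hInt : ∀ k ∈ range (m+1),
      MeasureTheory.Integrable (fun p : ℝ × ℝ => fA m k p.1 * gA m k p.2) := by
    intro k _
    rw [MeasureTheory.Measure.volume_eq_prod]
    refine MeasureTheory.Integrable.mul_prod ?_ ?_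
    · have h := (integrable_scaled (Hp m * Hp k)).const_mul
        ((m.choose k : ℝ) * (((2:ℝ)^m * (m.factorial:ℝ) * Real.sqrt Real.pi) ^ (-(1/2:ℝ)))^2
          * ((Real.sqrt Real.pi) ^ (-(1/2:ℝ)))^2 * (2:ℝ)^((m:ℝ)/2))
      refine h.congr (Filter.Eventually.of_forall fun x => ?_)
      unfold fA
      simp only [Polynomial.eval_mul]
      ring
    · refine (integrable_scaled (Hp (m-k))).congr (Filter.Eventually.of_forall fun y => ?_)
      unfold gA
      rfl
  rw [show (fun p : ℝ × ℝ => hermiteFun m p.1 * hermiteFun 0 p.2 *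
        hermiteFun m ((p.1 + p.2) / Real.sqrt 2) * hermiteFun 0 ((p.2 - p.1) / Real.sqrt 2))
      = fun p : ℝ × ℝ => ∑ k ∈ range (m+1), fA m k p.1 * gA m k p.2 from
      funext fun p => hpt p.1 p.2,
    MeasureTheory.integral_finset_sum _ hInt]
  have hsplit : ∀ k ∈ range (m+1),
      (∫ p : ℝ × ℝ, fA m k p.1 * gA m k p.2) = (∫ x : ℝ, fA m k x) * (∫ y : ℝ, gA m k y) := by
    intro k _
    rw [MeasureTheory.Measure.volume_eq_prod]
    exact MeasureTheory.integral_prod_mul _ _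
  rw [Finset.sum_congr rfl hsplit, Finset.sum_range_succ]
  have hzero : ∀ k ∈ range m, (∫ x : ℝ, fA m k x) * (∫ y : ℝ, gA m k y) = 0 := by
    intro k hk
    have hk' : k < m := mem_range.mp hk
    have e : m - k = (m - k - 1) + 1 := by omega
    have hg0 : (∫ y : ℝ, gA m k y) = 0 := by
      rw [show (fun y : ℝ => gA m k y)
          = fun y : ℝ => (Hp ((m-k-1)+1)).eval (Real.sqrt 2 * y) * Real.exp (-y^2) from
          funext fun y => by unfold gA; rw [← e]]
      exact integral_Hp_succ_zero _
    rw [hg0, mul_zero]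
  rw [Finset.sum_eq_zero hzero, zero_add]
  -- evaluate the k = m term
  have hg : (∫ y : ℝ, gA m m y) = Real.sqrt Real.pi := by
    rw [show (fun y : ℝ => gA m m y) = fun y : ℝ => Real.exp (-1*y^2) from
      funext fun y => by unfold gA; simp [Nat.sub_self, neg_one_mul]]
    rw [integral_gaussian, div_one]
  have hf : (∫ x : ℝ, fA m m x)
      = ((m.choose m : ℝ) * (((2:ℝ)^m * (m.factorial:ℝ) * Real.sqrt Real.pi) ^ (-(1/2:ℝ)))^2
          * ((Real.sqrt Real.pi) ^ (-(1/2:ℝ)))^2 * (2:ℝ)^((m:ℝ)/2))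
        * ((m.factorial:ℝ) * Real.sqrt Real.pi) := by
    rw [show (fun x : ℝ => fA m m x)
        = fun x : ℝ => ((m.choose m : ℝ)
            * (((2:ℝ)^m * (m.factorial:ℝ) * Real.sqrt Real.pi) ^ (-(1/2:ℝ)))^2
            * ((Real.sqrt Real.pi) ^ (-(1/2:ℝ)))^2 * (2:ℝ)^((m:ℝ)/2))
          * ((Hp m).eval (Real.sqrt 2 * x) * (Hp m).eval (Real.sqrt 2 * x) * Real.exp (-x^2)) from
        funext fun x => by unfold fA; ring,
      MeasureTheory.integral_const_mul, integral_Hp_sq]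
  rw [hf, hg]
  -- final numerics
  have hA : (0:ℝ) < (2:ℝ)^m * (m.factorial:ℝ) * Real.sqrt Real.pi := by
    have := Real.sqrt_pos.mpr Real.pi_pos
    positivity
  have hsp : (0:ℝ) < Real.sqrt Real.pi := Real.sqrt_pos.mpr Real.pi_pos
  have h1 : (((2:ℝ)^m * (m.factorial:ℝ) * Real.sqrt Real.pi) ^ (-(1/2:ℝ)))^2
      = ((2:ℝ)^m * (m.factorial:ℝ) * Real.sqrt Real.pi)⁻¹ := by
    rw [← Real.rpow_natCast (((2:ℝ)^m * (m.factorial:ℝ) * Real.sqrt Real.pi) ^ (-(1/2:ℝ))) 2,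
      ← Real.rpow_mul hA.le]
    norm_num
    rw [Real.rpow_neg_one, mul_inv, mul_inv]
    ring
  have h0 : ((Real.sqrt Real.pi) ^ (-(1/2:ℝ)))^2 = (Real.sqrt Real.pi)⁻¹ := by
    rw [← Real.rpow_natCast ((Real.sqrt Real.pi) ^ (-(1/2:ℝ))) 2, ← Real.rpow_mul hsp.le]
    norm_num
    rw [Real.rpow_neg_one]
  have hkey : (2:ℝ)^((m:ℝ)/2) = (2:ℝ)^(-(m:ℝ)/2) * (2:ℝ)^m := by
    rw [← Real.rpow_natCast (2:ℝ) m, ← Real.rpow_add two_pos]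
    congr 1
    ring
  have hfac : ((m.factorial:ℝ)) ≠ 0 := Nat.cast_ne_zero.mpr m.factorial_ne_zero
  have h2m : ((2:ℝ)^m) ≠ 0 := by positivity
  rw [Nat.choose_self, Nat.cast_one, h1, h0, hkey]
  field_simp
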